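/- Let u : ℕ → Σ be an infinite word over a finite alphabet Σ. Then (a) the set Fac(u) of finite factors of u is well-quasi-ordered by the prefix order if and only if u is ultimately periodic (there exist p > 0 and N such that u(i) = u(i+p) for all i ≥ N); and (b) Fac(u) is well-quasi-ordered by the suffix order if and only if u is periodic (there exists p > 0 such that u(i) = u(i+p) for all i). -/

import Mathlib

/-- The set of finite factors of the infinite word `u : ℕ → A`. -/
def FacN {A : Type*} (u : ℕ → A) : Set (List A) :=
  {v | ∃ i : ℕ, v = (List.range v.length).map fun k => u (i + k)}

/-- A set `S` is well-quasi-ordered by the relation `r` if every infinite sequence of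
elements of `S` contains an infinite increasing subsequence. -/
def WqoOn {A : Type*} (r : A → A → Prop) (S : Set A) : Prop :=
  ∀ f : ℕ → A, (∀ n, f n ∈ S) →
    ∃ g : ℕ → ℕ, StrictMono g ∧ ∀ m n, m < n → r (f (g m)) (f (g n))

namespace WqoAux
variable {A : Type*} {u : ℕ → A}

def fact (u : ℕ → A) (i L : ℕ) : List A := (List.range L).map fun k => u (i + k)

@[simp] lemma fact_length (i L : ℕ) : (fact u i L).length = L := by simp [fact]

lemma fact_mem (u : ℕ → A) (i L : ℕ) : fact u i L ∈ FacN u := ⟨i, by simp [fact]⟩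

lemma mem_iff {v : List A} : v ∈ FacN u ↔ ∃ i, v = fact u i v.length := Iff.rfl

lemma fact_getElem {i L s : ℕ} (hs : s < L) :
    (fact u i L)[s]'(by simpa using hs) = u (i + s) := by simp [fact]

lemma fact_eq_iff {i j L : ℕ} :
    fact u i L = fact u j L ↔ ∀ s < L, u (i + s) = u (j + s) := by
  constructor
  · intro h s hs
    calc u (i + s) = (fact u i L)[s]'(by simpa using hs) := (fact_getElem hs).symm
      _ = (fact u j L)[s]'(by simpa using hs) := List.getElem_of_eq h _
      _ = u (j + s) := fact_getElem hs
  · intro h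
    apply List.ext_getElem (by simp)
    intro s h1 h2
    simp only [fact_length] at h1
    rw [fact_getElem h1, fact_getElem h1]
    exact h s h1

lemma fact_take {l L : ℕ} (h : l ≤ L) (i : ℕ) : (fact u i L).take l = fact u i l := by
  simp [fact, ← List.map_take, List.take_range, Nat.min_eq_left h]

lemma fact_drop (d : ℕ) (i L : ℕ) : (fact u i L).drop d = fact u (i + d) (L - d) := by
  apply List.ext_getElem (by simp)
  intro s h1 h2
  simp only [List.length_drop, fact_length] at h1
  rw [List.getElem_drop, fact_getElem (by omega), fact_getElem (by omega)]
  ring_nf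

lemma fact_concat (i L : ℕ) : fact u i (L + 1) = fact u i L ++ [u (i + L)] := by
  simp [fact, List.range_succ]

lemma fact_prefix {a b : ℕ} (h : a ≤ b) (i : ℕ) : fact u i a <+: fact u i b := by
  rw [← fact_take h i]; exact List.take_prefix _ _

lemma prefix_unique {l₁ l₂ l₃ : List A} (h1 : l₁ <+: l₂) (h3 : l₃ <+: l₂)
    (h : l₁.length = l₃.length) : l₁ = l₃ := by
  obtain ⟨t, rfl⟩ := h1
  obtain ⟨t', ht'⟩ := h3
  exact ((List.append_inj ht' h.symm).1).symm

lemma suffix_unique {l₁ l₂ l₃ : List A} (h1 : l₁ <:+ l₂) (h3 : l₃ <:+ l₂)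
    (h : l₁.length = l₃.length) : l₁ = l₃ := by
  obtain ⟨t, rfl⟩ := h1
  obtain ⟨t', ht'⟩ := h3
  refine ((List.append_inj ht' ?_).2).symm
  have := congrArg List.length ht'
  simp at this; omega

lemma prefix_of_concat {l l' : List A} {a : A} (h : l <+: l' ++ [a])
    (hl : l.length ≤ l'.length) : l <+: l' := by
  have := List.prefix_iff_eq_take.mp h
  rw [List.take_append_of_le_length hl] at this
  rw [this]; exact List.take_prefix _ _

lemma suffix_of_cons {l l' : List A} {a : A} (h : l <:+ a :: l')
    (hl : l.length ≤ l'.length) : l <:+ l' := by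
  rcases List.suffix_cons_iff.mp h with h | h
  · exfalso; have := congrArg List.length h; simp at this; omega
  · exact h

/-- No right-special factor of length `n` (occurrence form). -/
def NoRS (u : ℕ → A) (n : ℕ) : Prop :=
  ∀ i j, (∀ s < n, u (i + s) = u (j + s)) → u (i + n) = u (j + n)

/-- No left-special factor of length `n` (occurrence form). -/
def NoLS (u : ℕ → A) (n : ℕ) : Prop :=
  ∀ i j, (∀ s < n, u (i + 1 + s) = u (j + 1 + s)) → u i = u j

lemma fwd (n : ℕ) (h : NoRS u n) {i j : ℕ} (hE : ∀ s < n, u (i + s) = u (j + s)) :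
    ∀ t, ∀ s < n, u (i + t + s) = u (j + t + s) := by
  intro t
  induction t with
  | zero => simpa using hE
  | succ t ih =>
    have hlet : u (i + t + n) = u (j + t + n) := h _ _ ih
    intro s hs
    rcases Nat.lt_or_ge (s + 1) n with h1 | h1
    · have := ih (s + 1) h1
      convert this using 2 <;> omega
    · have hsn : s + 1 = n := by omega
      convert hlet using 2 <;> omega

lemma up_of_noRS [Finite A] (n : ℕ) (h : NoRS u n) :
    ∃ p > 0, ∃ N : ℕ, ∀ i ≥ N, u (i + p) = u i := by
  obtain ⟨i, j, hne, hW⟩ := Finite.exists_ne_map_eq_of_infinite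
    (fun i : ℕ => (fun s : Fin n => u (i + s)))
  wlog hij : i < j generalizing i j
  · exact this j i (Ne.symm hne) hW.symm (by omega)
  have hE : ∀ s < n, u (i + s) = u (j + s) := fun s hs => congrFun hW ⟨s, hs⟩
  refine ⟨j - i, by omega, i + n, fun m hm => ?_⟩
  obtain ⟨t, rfl⟩ : ∃ t, m = i + n + t := ⟨m - (i + n), by omega⟩
  have h1 : u (i + t + n) = u (j + t + n) := h _ _ (fwd n h hE t)
  have h2 : i + n + t + (j - i) = j + t + n := by omega
  rw [h2]
  rw [show i + n + t = i + t + n by omega]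
  exact h1.symm

lemma stepB (n : ℕ) (h : NoLS u n) {m m' : ℕ}
    (hE : ∀ s < n, u (m + 1 + s) = u (m' + 1 + s)) :
    u m = u m' ∧ ∀ s < n, u (m + s) = u (m' + s) := by
  have hl : u m = u m' := h _ _ hE
  refine ⟨hl, fun s hs => ?_⟩
  match s with
  | 0 => simpa using hl
  | s + 1 =>
    have := hE s (by omega)
    convert this using 2 <;> omega

lemma backE (n : ℕ) (h : NoLS u n) {i j : ℕ} (hij : i ≤ j)
    (hE : ∀ s < n, u (i + s) = u (j + s)) :
    ∀ t ≤ i, ∀ s < n, u (i - t + s) = u (j - t + s) := by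
  intro t
  induction t with
  | zero => simpa using hE
  | succ t ih =>
    intro ht
    have prev := ih (by omega)
    have h1 : i - t = i - (t + 1) + 1 := by omega
    have h2 : j - t = j - (t + 1) + 1 := by omega
    rw [h1, h2] at prev
    exact (stepB n h prev).2

lemma lettersB (n : ℕ) (h : NoLS u n) {i j : ℕ} (hij : i ≤ j)
    (hE : ∀ s < n, u (i + s) = u (j + s)) :
    ∀ m < i, u m = u (m + (j - i)) := by
  intro m hm
  have hb := backE n h hij hE (i - (m + 1)) (by omega)
  have h1 : i - (i - (m + 1)) = m + 1 := by omega
  have h2 : j - (i - (m + 1)) = m + (j - i) + 1 := by omega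
  rw [h1, h2] at hb
  exact (stepB n h hb).1

lemma periodic_of_noLS [Finite A] (n : ℕ) (h : NoLS u n) :
    ∃ p > 0, ∀ m : ℕ, u (m + p) = u m := by
  obtain ⟨w, hw⟩ := Finite.exists_infinite_fiber (fun i : ℕ => (fun s : Fin n => u (i + s)))
  set O : Set ℕ := (fun i : ℕ => (fun s : Fin n => u (i + s))) ⁻¹' {w} with hO
  have hOinf : O.Infinite := Set.infinite_coe_iff.mp hw
  have hEO : ∀ {a b : ℕ}, a ∈ O → b ∈ O → ∀ s < n, u (a + s) = u (b + s) := by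
    intro a b ha hb s hs
    have : (fun s : Fin n => u (a + s)) = (fun s : Fin n => u (b + s)) := by
      rw [Set.mem_preimage, Set.mem_singleton_iff] at ha hb
      rw [ha, hb]
    exact congrFun this ⟨s, hs⟩
  obtain ⟨i, hiO⟩ := hOinf.nonempty
  obtain ⟨j, hjO, hij⟩ := hOinf.exists_gt i
  refine ⟨j - i, by omega, fun m => ?_⟩
  obtain ⟨k, hkO, hk⟩ := hOinf.exists_gt (m + j)
  have hk'O : k - (j - i) ∈ O := by
    have hjk : j ≤ k := by omega
    have hback := backE n h hjk (hEO hjO hkO) (j - i) (by omega)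
    have h1 : j - (j - i) = i := by omega
    rw [h1] at hback
    show (fun s : Fin n => u (k - (j - i) + s)) = w
    funext s
    have hiw : (fun s : Fin n => u (i + s)) = w := hiO
    rw [← congrFun hiw s]
    exact (hback s s.isLt).symm
  have hkk' : k - (j - i) ≤ k := by omega
  have hd : k - (k - (j - i)) = j - i := by omega
  have := lettersB n h hkk' (hEO hk'O hkO) m (by omega)
  rw [hd] at this
  exact this.symm

/-- If there is a right-special factor of each length, prefix-wqo fails. -/
lemma false_of_allRS (hwqo : WqoOn (· <+: ·) (FacN u))
    (hall : ∀ q, ∃ i j, (∀ s < q, u (i + s) = u (j + s)) ∧ u (i + q) ≠ u (j + q)) : False := by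
  choose I J hIJ hne using hall
  classical
  set pos : ℕ → ℕ := fun k => if Even k then I (k / 2) else J (k / 2) with hpos
  set f : ℕ → List A := fun k => fact u (pos k) (k / 2 + 1) with hfdef
  obtain ⟨g, hg, hchain⟩ := hwqo f (fun k => fact_mem u _ _)
  have hbase : ∀ q, fact u (I q) q = fact u (J q) q := fun q => fact_eq_iff.mpr (hIJ q)
  have hsplit : ∀ k, f k = fact u (I (k / 2)) (k / 2) ++ [u (pos k + k / 2)] := by
    intro k
    show fact u (pos k) (k / 2 + 1) = _
    rw [fact_concat]
    congr 1
    by_cases h : Even k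
    · simp [pos, h]
    · simp [pos, h, (hbase (k / 2)).symm]
  have hflen : ∀ k, (f k).length = k / 2 + 1 := fun k => by simp [hfdef]
  have hne2 : ∀ q, f (2 * q) ≠ f (2 * q + 1) := by
    intro q hEq
    have e1 : f (2 * q) = fact u (I q) (q + 1) := by
      simp [hfdef, pos, Nat.mul_div_cancel_left q (by norm_num : 0 < 2)]
    have e2 : f (2 * q + 1) = fact u (J q) (q + 1) := by
      have hodd : ¬ Even (2 * q + 1) := by simp [Nat.even_add_one, parity_simps]
      have : (2 * q + 1) / 2 = q := by omega
      simp [hfdef, pos, hodd, this]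
    rw [e1, e2] at hEq
    exact hne q (fact_eq_iff.mp hEq q (by omega))
  have hinj : Function.Injective f := by
    intro k k' hkk
    by_contra hnekk
    have hlen : k / 2 = k' / 2 := by
      have := congrArg List.length hkk
      rw [hflen, hflen] at this
      omega
    rcases (by omega : k = 2 * (k / 2) ∧ k' = 2 * (k / 2) + 1 ∨
        k = 2 * (k / 2) + 1 ∧ k' = 2 * (k / 2)) with ⟨h1, h2⟩ | ⟨h1, h2⟩
    · exact hne2 (k / 2) (by rw [← h2, ← h1]; exact hkk)
    · exact hne2 (k / 2) (by rw [← h1, ← h2]; exact hkk.symm)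
  have hstrict : ∀ m m', m < m' → (g m / 2) < (g m' / 2) := by
    intro m m' hmm
    have hpre := hchain m m' hmm
    have hnef : f (g m) ≠ f (g m') :=
      fun e => absurd (hg.injective (hinj e)) (by omega)
    have hle := hpre.length_le
    rw [hflen, hflen] at hle
    rcases Nat.lt_or_ge ((g m / 2)) ((g m' / 2)) with h | h
    · exact h
    · exfalso
      apply hnef
      apply hpre.eq_of_length
      rw [hflen, hflen]
      omega
  set c : ℕ → A := fun m => u (pos (g m) + (g m / 2)) with hc
  have hfm : ∀ m, f (g m) = fact u (I ((g m / 2))) ((g m / 2)) ++ [c m] := fun m => hsplit (g m)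
  have hx0 : ∀ m, ∃ xm ∈ FacN u, ∃ d,
      xm = fact u (I ((g m / 2))) ((g m / 2)) ++ [d] ∧ d ≠ c m := by
    intro m
    by_cases h : u (I ((g m / 2)) + (g m / 2)) = c m
    · refine ⟨fact u (J ((g m / 2))) ((g m / 2) + 1), fact_mem u _ _, u (J ((g m / 2)) + (g m / 2)), ?_, ?_⟩
      · rw [fact_concat, hbase]
      · intro hcon; exact hne ((g m / 2)) (h.trans hcon.symm)
    · exact ⟨fact u (I ((g m / 2))) ((g m / 2) + 1), fact_mem u _ _, u (I ((g m / 2)) + (g m / 2)),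
        by rw [fact_concat], h⟩
  choose x hxmem d hxd hdc using hx0
  have hanti : ∀ m m', m < m' → ¬ x m <+: x m' := by
    intro m m' hmm hpre
    have hq : (g m / 2) < (g m' / 2) := hstrict m m' hmm
    have hxl : (x m).length = (g m / 2) + 1 := by rw [hxd]; simp
    have h1 : x m <+: fact u (I ((g m' / 2))) ((g m' / 2)) := by
      apply prefix_of_concat (l' := fact u (I ((g m' / 2))) ((g m' / 2)))
      · rw [← hxd m']; exact hpre
      · rw [hxl]; simp; omega
    have h2 : f (g m) <+: fact u (I ((g m' / 2))) ((g m' / 2)) := by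
      apply prefix_of_concat (l' := fact u (I ((g m' / 2))) ((g m' / 2)))
      · rw [← hfm m']; exact hchain m m' hmm
      · rw [hflen]; simp; omega
    have heq : x m = f (g m) := by
      apply prefix_unique h1 h2
      rw [hxl, hflen]
    rw [hxd, hfm] at heq
    exact hdc m (by simpa using heq)
  obtain ⟨g2, hg2, hchain2⟩ := hwqo x hxmem
  exact hanti (g2 0) (g2 1) (hg2 (by norm_num)) (hchain2 0 1 (by norm_num))

lemma fact_cons (i L : ℕ) : fact u i (L + 1) = u i :: fact u (i + 1) L := by
  apply List.ext_getElem (by simp)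
  intro s h1 h2
  match s with
  | 0 => simp [fact_getElem (by omega : 0 < L + 1)]
  | s + 1 =>
    simp only [fact_length] at h1
    rw [fact_getElem (by omega)]
    simp only [List.getElem_cons_succ]
    rw [fact_getElem (by omega)]
    ring_nf

/-- If there is a left-special factor of each length, suffix-wqo fails. -/
lemma false_of_allLS (hwqo : WqoOn (· <:+ ·) (FacN u))
    (hall : ∀ q, ∃ i j, (∀ s < q, u (i + 1 + s) = u (j + 1 + s)) ∧ u i ≠ u j) : False := by
  choose I J hIJ hne using hall
  classical
  set pos : ℕ → ℕ := fun k => if Even k then I (k / 2) else J (k / 2) with hpos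
  set f : ℕ → List A := fun k => fact u (pos k) (k / 2 + 1) with hfdef
  obtain ⟨g, hg, hchain⟩ := hwqo f (fun k => fact_mem u _ _)
  have hbase : ∀ q, fact u (I q + 1) q = fact u (J q + 1) q := fun q => fact_eq_iff.mpr (hIJ q)
  have hsplit : ∀ k, f k = u (pos k) :: fact u (I (k / 2) + 1) (k / 2) := by
    intro k
    show fact u (pos k) (k / 2 + 1) = _
    rw [fact_cons]
    congr 1
    by_cases h : Even k
    · simp [pos, h]
    · simp [pos, h, (hbase (k / 2)).symm]
  have hflen : ∀ k, (f k).length = k / 2 + 1 := fun k => by simp [hfdef]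
  have hne2 : ∀ q, f (2 * q) ≠ f (2 * q + 1) := by
    intro q hEq
    have e1 : f (2 * q) = fact u (I q) (q + 1) := by
      simp [hfdef, pos, Nat.mul_div_cancel_left q (by norm_num : 0 < 2)]
    have e2 : f (2 * q + 1) = fact u (J q) (q + 1) := by
      have hodd : ¬ Even (2 * q + 1) := by simp [Nat.even_add_one, parity_simps]
      have : (2 * q + 1) / 2 = q := by omega
      simp [hfdef, pos, hodd, this]
    rw [e1, e2, fact_cons, fact_cons, hbase q] at hEq
    exact hne q (by simpa using hEq)
  have hinj : Function.Injective f := by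
    intro k k' hkk
    by_contra hnekk
    have hlen : k / 2 = k' / 2 := by
      have := congrArg List.length hkk
      rw [hflen, hflen] at this
      omega
    rcases (by omega : k = 2 * (k / 2) ∧ k' = 2 * (k / 2) + 1 ∨
        k = 2 * (k / 2) + 1 ∧ k' = 2 * (k / 2)) with ⟨h1, h2⟩ | ⟨h1, h2⟩
    · exact hne2 (k / 2) (by rw [← h2, ← h1]; exact hkk)
    · exact hne2 (k / 2) (by rw [← h1, ← h2]; exact hkk.symm)
  have hstrict : ∀ m m', m < m' → (g m / 2) < (g m' / 2) := by
    intro m m' hmm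
    have hpre := hchain m m' hmm
    have hnef : f (g m) ≠ f (g m') :=
      fun e => absurd (hg.injective (hinj e)) (by omega)
    have hle := hpre.length_le
    rw [hflen, hflen] at hle
    rcases Nat.lt_or_ge ((g m / 2)) ((g m' / 2)) with h | h
    · exact h
    · exfalso
      apply hnef
      apply hpre.eq_of_length
      rw [hflen, hflen]
      omega
  set c : ℕ → A := fun m => u (pos (g m)) with hc
  have hfm : ∀ m, f (g m) = c m :: fact u (I ((g m / 2)) + 1) ((g m / 2)) := fun m => hsplit (g m)
  have hx0 : ∀ m, ∃ xm ∈ FacN u, ∃ d,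
      xm = d :: fact u (I ((g m / 2)) + 1) ((g m / 2)) ∧ d ≠ c m := by
    intro m
    by_cases h : u (I ((g m / 2))) = c m
    · refine ⟨fact u (J ((g m / 2))) ((g m / 2) + 1), fact_mem u _ _, u (J ((g m / 2))), ?_, ?_⟩
      · rw [fact_cons, hbase]
      · intro hcon; exact hne ((g m / 2)) (h.trans hcon.symm)
    · exact ⟨fact u (I ((g m / 2))) ((g m / 2) + 1), fact_mem u _ _, u (I ((g m / 2))),
        by rw [fact_cons], h⟩
  choose x hxmem d hxd hdc using hx0
  have hanti : ∀ m m', m < m' → ¬ x m <:+ x m' := by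
    intro m m' hmm hsuf
    have hq : (g m / 2) < (g m' / 2) := hstrict m m' hmm
    have hxl : (x m).length = (g m / 2) + 1 := by rw [hxd]; simp
    have h1 : x m <:+ fact u (I ((g m' / 2)) + 1) ((g m' / 2)) := by
      apply suffix_of_cons (a := d m')
      · rw [← hxd m']; exact hsuf
      · rw [hxl]; simp; omega
    have h2 : f (g m) <:+ fact u (I ((g m' / 2)) + 1) ((g m' / 2)) := by
      apply suffix_of_cons (a := c m')
      · rw [← hfm m']; exact hchain m m' hmm
      · rw [hflen]; simp; omega
    have heq : x m = f (g m) := by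
      apply suffix_unique h1 h2
      rw [hxl, hflen]
    rw [hxd, hfm] at heq
    exact hdc m (by simpa using heq)
  obtain ⟨g2, hg2, hchain2⟩ := hwqo x hxmem
  exact hanti (g2 0) (g2 1) (hg2 (by norm_num)) (hchain2 0 1 (by norm_num))

lemma wqo_prefix_of_up (p N : ℕ) (hp : 0 < p) (hper : ∀ i ≥ N, u (i + p) = u i) :
    WqoOn (· <+: ·) (FacN u) := by
  classical
  intro f hf
  choose I hI using fun n => (hf n : ∃ i, f n = fact u i (f n).length)
  set L : ℕ → ℕ := fun n => (f n).length with hL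
  have hperiter : ∀ m ≥ N, ∀ t, u (m + t * p) = u m := by
    intro m hm t
    induction t with
    | zero => simp
    | succ t ih =>
      rw [show m + (t + 1) * p = m + t * p + p by ring, hper _ (by omega), ih]
  set jf : ℕ → ℕ := fun n => if I n < N then I n else N + (I n - N) % p with hjf
  have hjlt : ∀ n, jf n < N + p := by
    intro n
    by_cases h : I n < N
    · simp only [hjf, if_pos h]; omega
    · simp only [hjf, if_neg h]
      have := Nat.mod_lt (I n - N) hp
      omega
  have hfj : ∀ n, f n = fact u (jf n) (L n) := by
    intro n
    rw [hI n]
    show fact u (I n) (L n) = fact u (jf n) (L n)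
    by_cases h : I n < N
    · have : jf n = I n := by simp [hjf, h]
      rw [this]
    · have hjfn : jf n = N + (I n - N) % p := by simp [hjf, h]
      rw [hjfn]
      apply fact_eq_iff.mpr
      intro s hs
      have hq : I n + s = N + (I n - N) % p + s + (I n - N) / p * p := by
        have h1 := Nat.div_add_mod (I n - N) p
        have h2 : (I n - N) / p * p = p * ((I n - N) / p) := Nat.mul_comm _ _
        omega
      rw [hq]
      exact hperiter _ (by omega) _
  obtain ⟨y, hy⟩ := Finite.exists_infinite_fiber (fun n => (⟨jf n, hjlt n⟩ : Fin (N + p)))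
  have hyinf : ((fun n => (⟨jf n, hjlt n⟩ : Fin (N + p))) ⁻¹' {y}).Infinite :=
    Set.infinite_coe_iff.mp hy
  set S : Set ℕ := (fun n => (⟨jf n, hjlt n⟩ : Fin (N + p))) ⁻¹' {y} with hS
  have hSset : (setOf (fun n => n ∈ S)).Infinite := hyinf
  set e : ℕ → ℕ := Nat.nth (fun n => n ∈ S) with he
  have hem : ∀ k, e k ∈ S := fun k => Nat.nth_mem_of_infinite hSset k
  have hemono : StrictMono e := Nat.nth_strictMono hSset
  have hpwo : (Set.univ : Set ℕ).IsPWO := (Set.isWF_univ_iff.mpr (inferInstance : WellFoundedLT ℕ)).isPWO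
  obtain ⟨g', hmono⟩ := hpwo.exists_monotone_subseq (f := fun k => L (e k))
    (fun _ => Set.mem_univ _)
  refine ⟨fun k => e (g' k), hemono.comp g'.strictMono, ?_⟩
  intro m n hmn
  have h1 : jf (e (g' m)) = y.val := congrArg Fin.val (hem (g' m))
  have h2 : jf (e (g' n)) = y.val := congrArg Fin.val (hem (g' n))
  rw [hfj (e (g' m)), hfj (e (g' n)), h1, h2]
  exact fact_prefix (hmono (le_of_lt hmn)) _

lemma wqo_suffix_of_periodic (p : ℕ) (hp : 0 < p) (hper : ∀ i, u (i + p) = u i) :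
    WqoOn (· <:+ ·) (FacN u) := by
  classical
  have umod : ∀ m, u m = u (m % p) := by
    intro m
    induction m using Nat.strong_induction_on with
    | _ m ih =>
      by_cases h : m < p
      · rw [Nat.mod_eq_of_lt h]
      · have hm : m = m - p + p := by omega
        have h3 : u m = u (m - p) := by
          have := hper (m - p)
          rwa [← hm] at this
        rw [h3, Nat.mod_eq_sub_mod (by omega : p ≤ m)]
        exact ih (m - p) (by omega)
  have ueq : ∀ a b, a % p = b % p → u a = u b := by
    intro a b h
    rw [umod a, umod b, h]
  intro f hf
  choose I hI using fun n => (hf n : ∃ i, f n = fact u i (f n).length)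
  set L : ℕ → ℕ := fun n => (f n).length with hL
  obtain ⟨y, hy⟩ := Finite.exists_infinite_fiber
    (fun n => (⟨(I n + L n) % p, Nat.mod_lt _ hp⟩ : Fin p))
  have hyinf := Set.infinite_coe_iff.mp hy
  set S : Set ℕ := (fun n => (⟨(I n + L n) % p, Nat.mod_lt _ hp⟩ : Fin p)) ⁻¹' {y} with hS
  have hSset : (setOf (fun n => n ∈ S)).Infinite := hyinf
  set e : ℕ → ℕ := Nat.nth (fun n => n ∈ S) with he
  have hem : ∀ k, e k ∈ S := fun k => Nat.nth_mem_of_infinite hSset k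
  have hemono : StrictMono e := Nat.nth_strictMono hSset
  have hpwo : (Set.univ : Set ℕ).IsPWO := (Set.isWF_univ_iff.mpr (inferInstance : WellFoundedLT ℕ)).isPWO
  obtain ⟨g', hmono⟩ := hpwo.exists_monotone_subseq (f := fun k => L (e k))
    (fun _ => Set.mem_univ _)
  refine ⟨fun k => e (g' k), hemono.comp g'.strictMono, ?_⟩
  intro m n hmn
  set a := e (g' m) with ha
  set b := e (g' n) with hb
  have hLab : L a ≤ L b := hmono (le_of_lt hmn)
  have hmod : (I a + L a) % p = (I b + L b) % p := by
    have h1 : (I a + L a) % p = y.val := congrArg Fin.val (hem (g' m))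
    have h2 : (I b + L b) % p = y.val := congrArg Fin.val (hem (g' n))
    rw [h1, h2]
  have key : f a = (f b).drop (L b - L a) := by
    rw [hI a, hI b]
    show fact u (I a) (L a) = (fact u (I b) (L b)).drop (L b - L a)
    rw [fact_drop, show L b - (L b - L a) = L a by omega]
    apply fact_eq_iff.mpr
    intro s hs
    apply ueq
    have harith : I a + s + L a = I a + L a + s := by ring
    have harith2 : I b + (L b - L a) + s + L a = I b + L b + s := by omega
    have hmm : (I a + s + L a) % p = (I b + (L b - L a) + s + L a) % p := by
      rw [harith, harith2, Nat.add_mod, hmod, ← Nat.add_mod]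
    exact Nat.ModEq.add_right_cancel' _ hmm
  rw [key]
  exact List.drop_suffix _ _

end WqoAux

theorem stmt0 {A : Type*} [Finite A] (u : ℕ → A) :
    (WqoOn (· <+: ·) (FacN u) ↔ ∃ p > 0, ∃ N : ℕ, ∀ i ≥ N, u (i + p) = u i) ∧
    (WqoOn (· <:+ ·) (FacN u) ↔ ∃ p > 0, ∀ i : ℕ, u (i + p) = u i) := by
  constructor
  · constructor
    · intro hwqo
      by_cases hall : ∀ q, ∃ i j, (∀ s < q, u (i + s) = u (j + s)) ∧ u (i + q) ≠ u (j + q)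
      · exact (WqoAux.false_of_allRS hwqo hall).elim
      · push_neg at hall
        obtain ⟨n, hn⟩ := hall
        exact WqoAux.up_of_noRS n hn
    · rintro ⟨p, hp, N, hper⟩
      exact WqoAux.wqo_prefix_of_up p N hp hper
  · constructor
    · intro hwqo
      by_cases hall : ∀ q, ∃ i j, (∀ s < q, u (i + 1 + s) = u (j + 1 + s)) ∧ u i ≠ u j
      · exact (WqoAux.false_of_allLS hwqo hall).elim
      · push_neg at hall
        obtain ⟨n, hn⟩ := hall
        exact WqoAux.periodic_of_noLS n hn
    · rintro ⟨p, hp, hper⟩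
      exact WqoAux.wqo_suffix_of_periodic p hp hper
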